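/- The FCLP does not imply the CBLP: there exists a finite bounded lattice H (an eight-element non-modular lattice, obtained from the five-element modular non-distributive lattice ('diamond') by adjoining a new top element above a two-element chain over its top, together with an extra atom of the new top) which has the FCLP but does not have the CBLP. In particular, there exists a congruence-distributive algebra with FCLP and without CBLP. -/

import Mathlib

/-! Universal-algebra framework: algebras over a signature, congruences,
factor congruences, lifting properties. -/

structure Signature where
  ops : Type
  arity : ops → ℕ

structure Alg (σ : Signature) where
  carrier : Type
  interp : ∀ f : σ.ops, (Fin (σ.arity f) → carrier) → carrier

namespace Alg

variable {σ : Signature}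

/-- A congruence: an equivalence relation compatible with all operations. -/
def IsCon (A : Alg σ) (r : A.carrier → A.carrier → Prop) : Prop :=
  Equivalence r ∧
    ∀ (f : σ.ops) (x y : Fin (σ.arity f) → A.carrier),
      (∀ i, r (x i) (y i)) → r (A.interp f x) (A.interp f y)

/-- The least congruence `Δ_A`. -/
def delta (A : Alg σ) : A.carrier → A.carrier → Prop := fun a b => a = b

/-- The greatest congruence `∇_A = A²`. -/
def nabla (A : Alg σ) : A.carrier → A.carrier → Prop := fun _ _ => True

/-- Meet (intersection) of congruences. -/
def conMeet (A : Alg σ) (r s : A.carrier → A.carrier → Prop) :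
    A.carrier → A.carrier → Prop := fun a b => r a b ∧ s a b

/-- Join of congruences: the least congruence containing both. -/
def conJoin (A : Alg σ) (r s : A.carrier → A.carrier → Prop) :
    A.carrier → A.carrier → Prop := fun a b =>
  ∀ t, A.IsCon t → (∀ x y, r x y → t x y) → (∀ x y, s x y → t x y) → t a b

/-- The congruence generated by a set of pairs. -/
def conGen (A : Alg σ) (X : Set (A.carrier × A.carrier)) :
    A.carrier → A.carrier → Prop := fun a b =>
  ∀ t, A.IsCon t → (∀ p ∈ X, t p.1 p.2) → t a b

/-- Composition of relations: `(a,b) ∈ comp r s` iff `(a,x) ∈ s` and `(x,b) ∈ r`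
for some `x`. -/
def comp (A : Alg σ) (r s : A.carrier → A.carrier → Prop) :
    A.carrier → A.carrier → Prop := fun a b => ∃ x, s a x ∧ r x b

/-- Factor congruences: congruences `φ` having a congruence `φ*` with
`φ ∨ φ* = ∇`, `φ ∩ φ* = Δ` and `φ ∘ φ* = φ* ∘ φ`. -/
def IsFC (A : Alg σ) (φ : A.carrier → A.carrier → Prop) : Prop :=
  A.IsCon φ ∧ ∃ ψ, A.IsCon ψ ∧ A.conJoin φ ψ = A.nabla ∧
    A.conMeet φ ψ = A.delta ∧ A.comp φ ψ = A.comp ψ φ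

/-- Boolean congruences: complemented elements of the lattice `Con(A)`. -/
def IsBooleanCon (A : Alg σ) (φ : A.carrier → A.carrier → Prop) : Prop :=
  A.IsCon φ ∧ ∃ ψ, A.IsCon ψ ∧ A.conJoin φ ψ = A.nabla ∧ A.conMeet φ ψ = A.delta

/-- `A` is congruence-distributive iff the lattice `Con(A)` is distributive. -/
def CongDistrib (A : Alg σ) : Prop :=
  ∀ r s t, A.IsCon r → A.IsCon s → A.IsCon t →
    A.conMeet r (A.conJoin s t) = A.conJoin (A.conMeet r s) (A.conMeet r t)

/-- `A` is congruence-permutable iff all congruences permute under composition. -/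
def CongPermutable (A : Alg σ) : Prop :=
  ∀ r s, A.IsCon r → A.IsCon s → A.comp r s = A.comp s r

/-- Arithmetical = congruence-distributive + congruence-permutable. -/
def Arithmetical (A : Alg σ) : Prop := A.CongDistrib ∧ A.CongPermutable

/-- The quotient algebra `A/θ`. -/
noncomputable def quotAlg (A : Alg σ) (θ : A.carrier → A.carrier → Prop) :
    Alg σ where
  carrier := Quot θ
  interp f x := Quot.mk θ (A.interp f fun i => (x i).out)

/-- The image `α/θ = {(a/θ, b/θ) : (a,b) ∈ α}` of a relation in the quotient. -/
def quotRel (A : Alg σ) (θ α : A.carrier → A.carrier → Prop) :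
    Quot θ → Quot θ → Prop := fun x y =>
  ∃ a b, x = Quot.mk θ a ∧ y = Quot.mk θ b ∧ α a b

/-- `θ` has the Factor Congruence Lifting Property: the Boolean morphism
`FC(θ) : FC(A) → FC(A/θ)`, `ψ ↦ (ψ ∨ θ)/θ`, is surjective. -/
def HasFCLP (A : Alg σ) (θ : A.carrier → A.carrier → Prop) : Prop :=
  ∀ γ, (A.quotAlg θ).IsFC γ →
    ∃ ψ, A.IsFC ψ ∧ A.quotRel θ (A.conJoin ψ θ) = γ

/-- `θ` has the Congruence Boolean Lifting Property: the Boolean morphism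
`B(Con(A)) → B(Con(A/θ))`, `ψ ↦ (ψ ∨ θ)/θ`, is surjective. -/
def HasCBLP (A : Alg σ) (θ : A.carrier → A.carrier → Prop) : Prop :=
  ∀ γ, (A.quotAlg θ).IsBooleanCon γ →
    ∃ ψ, A.IsBooleanCon ψ ∧ A.quotRel θ (A.conJoin ψ θ) = γ

/-- `A` has FCLP iff every congruence of `A` has FCLP. -/
def AlgFCLP (A : Alg σ) : Prop := ∀ θ, A.IsCon θ → A.HasFCLP θ

/-- `A` has CBLP iff every congruence of `A` has CBLP. -/
def AlgCBLP (A : Alg σ) : Prop := ∀ θ, A.IsCon θ → A.HasCBLP θ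

/-- FC-normality. -/
def FCNormal (A : Alg σ) : Prop :=
  ∀ φ ψ, A.IsCon φ → A.IsCon ψ → A.comp φ ψ = A.nabla →
    ∃ α β, A.IsFC α ∧ A.IsFC β ∧ A.conMeet α β = A.delta ∧
      A.comp φ α = A.nabla ∧ A.comp ψ β = A.nabla

/-- B-normality. -/
def BNormal (A : Alg σ) : Prop :=
  ∀ φ ψ, A.IsCon φ → A.IsCon ψ → A.conJoin φ ψ = A.nabla →
    ∃ α β, A.IsBooleanCon α ∧ A.IsBooleanCon β ∧ A.conMeet α β = A.delta ∧
      A.conJoin φ α = A.nabla ∧ A.conJoin ψ β = A.nabla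

/-- Isomorphism of algebras. -/
def Iso (A B : Alg σ) : Prop :=
  ∃ e : A.carrier ≃ B.carrier,
    ∀ (f : σ.ops) (x : Fin (σ.arity f) → A.carrier),
      e (A.interp f x) = B.interp f fun i => e (x i)

/-- Direct product of a finite family of algebras. -/
def prodAlg {n : ℕ} (B : Fin n → Alg σ) : Alg σ where
  carrier := ∀ i, (B i).carrier
  interp f x := fun i => (B i).interp f fun j => x j i

/-- The product congruence `θ₁ × … × θₙ`. -/
def prodRel {n : ℕ} (B : Fin n → Alg σ)
    (θ : ∀ i, (B i).carrier → (B i).carrier → Prop) :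
    (prodAlg B).carrier → (prodAlg B).carrier → Prop :=
  fun x y => ∀ i, θ i (x i) (y i)

/-- Maximal congruences: maximal elements of `(Con(A) \ {∇}, ⊆)`. -/
def IsMaxCon (A : Alg σ) (θ : A.carrier → A.carrier → Prop) : Prop :=
  A.IsCon θ ∧ θ ≠ A.nabla ∧
    ∀ ψ, A.IsCon ψ → ψ ≠ A.nabla → (∀ a b, θ a b → ψ a b) → ψ = θ

/-- Prime congruences. -/
def IsPrimeCon (A : Alg σ) (θ : A.carrier → A.carrier → Prop) : Prop :=
  A.IsCon θ ∧ ∀ α β, A.IsCon α → A.IsCon β →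
    (∀ a b, α a b → β a b → θ a b) →
    (∀ a b, α a b → θ a b) ∨ ∀ a b, β a b → θ a b

end Alg

/-! The signature of bounded lattices, the Boolean center, and the BLP. -/

inductive LatOp | sup | inf | bot | top

abbrev latSig : Signature where
  ops := LatOp
  arity := fun f => match f with
    | .sup => 2 | .inf => 2 | .bot => 0 | .top => 0

/-- The algebra over `latSig` attached to a bounded lattice. -/
def latAlg (L : Type) [Lattice L] [BoundedOrder L] : Alg latSig where
  carrier := L
  interp := fun f => match f with
    | .sup => fun x => x 0 ⊔ x 1
    | .inf => fun x => x 0 ⊓ x 1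
    | .bot => fun _ => ⊥
    | .top => fun _ => ⊤

/-- A complemented element of an algebra over the bounded-lattice signature
(an element of the Boolean center). -/
def ComplementedElem (A : Alg latSig) (x : A.carrier) : Prop :=
  ∃ y, A.interp .inf ![x, y] = A.interp .bot ![] ∧
       A.interp .sup ![x, y] = A.interp .top ![]

/-- A congruence `θ` of a bounded lattice `L` has the Boolean Lifting Property
iff the Boolean morphism `B(L) → B(L/θ)`, `a ↦ a/θ`, is surjective. -/
def HasBLP (L : Type) [Lattice L] [BoundedOrder L] (θ : L → L → Prop) : Prop :=
  ∀ q : ((latAlg L).quotAlg θ).carrier,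
    ComplementedElem ((latAlg L).quotAlg θ) q →
    ∃ a : L, ComplementedElem (latAlg L) a ∧ Quot.mk θ a = q

set_option linter.constructorNameAsVariable false

inductive H : Type | e0 | a | b | c | x | y | z | e1
deriving DecidableEq

instance : Fintype H :=
  ⟨⟨(([.e0, .a, .b, .c, .x, .y, .z, .e1] : List H) : Multiset H), by decide⟩,
    fun x => by cases x <;> decide⟩

def Hle : H → H → Bool
  | .e0, .e0 => true
  | .e0, .a => true
  | .e0, .b => true
  | .e0, .c => true
  | .e0, .x => true
  | .e0, .y => true
  | .e0, .z => true
  | .e0, .e1 => true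
  | .a, .e0 => false
  | .a, .a => true
  | .a, .b => false
  | .a, .c => false
  | .a, .x => false
  | .a, .y => true
  | .a, .z => true
  | .a, .e1 => true
  | .b, .e0 => false
  | .b, .a => false
  | .b, .b => true
  | .b, .c => false
  | .b, .x => false
  | .b, .y => true
  | .b, .z => true
  | .b, .e1 => true
  | .c, .e0 => false
  | .c, .a => false
  | .c, .b => false
  | .c, .c => true
  | .c, .x => true
  | .c, .y => true
  | .c, .z => true
  | .c, .e1 => true
  | .x, .e0 => false
  | .x, .a => false
  | .x, .b => false
  | .x, .c => false
  | .x, .x => true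
  | .x, .y => false
  | .x, .z => false
  | .x, .e1 => true
  | .y, .e0 => false
  | .y, .a => false
  | .y, .b => false
  | .y, .c => false
  | .y, .x => false
  | .y, .y => true
  | .y, .z => true
  | .y, .e1 => true
  | .z, .e0 => false
  | .z, .a => false
  | .z, .b => false
  | .z, .c => false
  | .z, .x => false
  | .z, .y => false
  | .z, .z => true
  | .z, .e1 => true
  | .e1, .e0 => false
  | .e1, .a => false
  | .e1, .b => false
  | .e1, .c => false
  | .e1, .x => false
  | .e1, .y => false
  | .e1, .z => false
  | .e1, .e1 => true

def Hsup : H → H → H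
  | .e0, .e0 => .e0
  | .e0, .a => .a
  | .e0, .b => .b
  | .e0, .c => .c
  | .e0, .x => .x
  | .e0, .y => .y
  | .e0, .z => .z
  | .e0, .e1 => .e1
  | .a, .e0 => .a
  | .a, .a => .a
  | .a, .b => .y
  | .a, .c => .y
  | .a, .x => .e1
  | .a, .y => .y
  | .a, .z => .z
  | .a, .e1 => .e1
  | .b, .e0 => .b
  | .b, .a => .y
  | .b, .b => .b
  | .b, .c => .y
  | .b, .x => .e1
  | .b, .y => .y
  | .b, .z => .z
  | .b, .e1 => .e1
  | .c, .e0 => .c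
  | .c, .a => .y
  | .c, .b => .y
  | .c, .c => .c
  | .c, .x => .x
  | .c, .y => .y
  | .c, .z => .z
  | .c, .e1 => .e1
  | .x, .e0 => .x
  | .x, .a => .e1
  | .x, .b => .e1
  | .x, .c => .x
  | .x, .x => .x
  | .x, .y => .e1
  | .x, .z => .e1
  | .x, .e1 => .e1
  | .y, .e0 => .y
  | .y, .a => .y
  | .y, .b => .y
  | .y, .c => .y
  | .y, .x => .e1
  | .y, .y => .y
  | .y, .z => .z
  | .y, .e1 => .e1
  | .z, .e0 => .z
  | .z, .a => .z
  | .z, .b => .z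
  | .z, .c => .z
  | .z, .x => .e1
  | .z, .y => .z
  | .z, .z => .z
  | .z, .e1 => .e1
  | .e1, .e0 => .e1
  | .e1, .a => .e1
  | .e1, .b => .e1
  | .e1, .c => .e1
  | .e1, .x => .e1
  | .e1, .y => .e1
  | .e1, .z => .e1
  | .e1, .e1 => .e1

def Hinf : H → H → H
  | .e0, .e0 => .e0
  | .e0, .a => .e0
  | .e0, .b => .e0
  | .e0, .c => .e0
  | .e0, .x => .e0
  | .e0, .y => .e0
  | .e0, .z => .e0
  | .e0, .e1 => .e0
  | .a, .e0 => .e0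
  | .a, .a => .a
  | .a, .b => .e0
  | .a, .c => .e0
  | .a, .x => .e0
  | .a, .y => .a
  | .a, .z => .a
  | .a, .e1 => .a
  | .b, .e0 => .e0
  | .b, .a => .e0
  | .b, .b => .b
  | .b, .c => .e0
  | .b, .x => .e0
  | .b, .y => .b
  | .b, .z => .b
  | .b, .e1 => .b
  | .c, .e0 => .e0
  | .c, .a => .e0
  | .c, .b => .e0
  | .c, .c => .c
  | .c, .x => .c
  | .c, .y => .c
  | .c, .z => .c
  | .c, .e1 => .c
  | .x, .e0 => .e0
  | .x, .a => .e0
  | .x, .b => .e0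
  | .x, .c => .c
  | .x, .x => .x
  | .x, .y => .c
  | .x, .z => .c
  | .x, .e1 => .x
  | .y, .e0 => .e0
  | .y, .a => .a
  | .y, .b => .b
  | .y, .c => .c
  | .y, .x => .c
  | .y, .y => .y
  | .y, .z => .y
  | .y, .e1 => .y
  | .z, .e0 => .e0
  | .z, .a => .a
  | .z, .b => .b
  | .z, .c => .c
  | .z, .x => .c
  | .z, .y => .y
  | .z, .z => .z
  | .z, .e1 => .z
  | .e1, .e0 => .e0
  | .e1, .a => .a
  | .e1, .b => .b
  | .e1, .c => .c
  | .e1, .x => .x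
  | .e1, .y => .y
  | .e1, .z => .z
  | .e1, .e1 => .e1

theorem hle_refl : ∀ a : H, Hle a a = true := by decide
theorem hle_trans : ∀ a b c : H, Hle a b = true → Hle b c = true → Hle a c = true := by decide
theorem hle_antisymm : ∀ a b : H, Hle a b = true → Hle b a = true → a = b := by decide
theorem hle_sup_left : ∀ a b : H, Hle a (Hsup a b) = true := by decide
theorem hle_sup_right : ∀ a b : H, Hle b (Hsup a b) = true := by decide
theorem hsup_le : ∀ a b c : H, Hle a c = true → Hle b c = true → Hle (Hsup a b) c = true := by decide
theorem hinf_le_left : ∀ a b : H, Hle (Hinf a b) a = true := by decide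
theorem hinf_le_right : ∀ a b : H, Hle (Hinf a b) b = true := by decide
theorem hle_inf : ∀ a b c : H, Hle a b = true → Hle a c = true → Hle a (Hinf b c) = true := by decide

instance instHLat : Lattice H where
  le p q := Hle p q = true
  le_refl := hle_refl
  le_trans := hle_trans
  le_antisymm := hle_antisymm
  sup := Hsup
  le_sup_left := hle_sup_left
  le_sup_right := hle_sup_right
  sup_le := hsup_le
  inf := Hinf
  inf_le_left := hinf_le_left
  inf_le_right := hinf_le_right
  le_inf := hle_inf

instance : DecidableRel (α := H) (· ≤ ·) := fun p q =>
  inferInstanceAs (Decidable (Hle p q = true))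

instance instHBnd : BoundedOrder H where
  top := H.e1
  le_top := by decide
  bot := H.e0
  bot_le := by decide

instance : DecidableRel (α := H) (· ≤ ·) := fun p q =>
  inferInstanceAs (Decidable (Hle p q = true))

def c1 : H → Nat
  | .e0 => 1
  | .a => 2
  | .b => 3
  | .c => 4
  | .x => 5
  | .y => 0
  | .z => 0
  | .e1 => 6

def c2 : H → Nat
  | .e0 => 2
  | .a => 3
  | .b => 4
  | .c => 0
  | .x => 0
  | .y => 1
  | .z => 1
  | .e1 => 1

def c3 : H → Nat
  | .e0 => 0
  | .a => 0
  | .b => 0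
  | .c => 0
  | .x => 1
  | .y => 0
  | .z => 0
  | .e1 => 1

def t1R : H → H → Prop := fun p q => c1 p = c1 q
instance : DecidableRel t1R := fun p q => inferInstanceAs (Decidable (c1 p = c1 q))
def t2R : H → H → Prop := fun p q => c2 p = c2 q
instance : DecidableRel t2R := fun p q => inferInstanceAs (Decidable (c2 p = c2 q))
def t3R : H → H → Prop := fun p q => c3 p = c3 q
instance : DecidableRel t3R := fun p q => inferInstanceAs (Decidable (c3 p = c3 q))

abbrev Hcon (r : H → H → Prop) : Prop := (latAlg H).IsCon r

theorem rsup {r : H → H → Prop} (hr : Hcon r) (w : H) {u v : H} (h : r u v) :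
    r (u ⊔ w) (v ⊔ w) :=
  hr.2 .sup (fun i => if i.1 = 0 then u else w) (fun i => if i.1 = 0 then v else w)
    (fun i => by
      rcases i with ⟨i, hi⟩
      interval_cases i
      · exact h
      · exact hr.1.refl w)

theorem rinf {r : H → H → Prop} (hr : Hcon r) (w : H) {u v : H} (h : r u v) :
    r (u ⊓ w) (v ⊓ w) :=
  hr.2 .inf (fun i => if i.1 = 0 then u else w) (fun i => if i.1 = 0 then v else w)
    (fun i => by
      rcases i with ⟨i, hi⟩
      interval_cases i
      · exact h
      · exact hr.1.refl w)

theorem forceA {r : H → H → Prop} (hr : Hcon r) :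
    ∀ p q : H, ¬ t3R p q → r p q → r H.z H.e1 := by
  intro p q hne h
  cases p <;> cases q
  exacts [
    (absurd rfl hne),
    (absurd rfl hne),
    (absurd rfl hne),
    (absurd rfl hne),
    (rsup hr H.z (h)),
    (absurd rfl hne),
    (absurd rfl hne),
    (rsup hr H.z (h)),
    (absurd rfl hne),
    (absurd rfl hne),
    (absurd rfl hne),
    (absurd rfl hne),
    (rsup hr H.z (h)),
    (absurd rfl hne),
    (absurd rfl hne),
    (rsup hr H.z (h)),
    (absurd rfl hne),
    (absurd rfl hne),
    (absurd rfl hne),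
    (absurd rfl hne),
    (rsup hr H.z (h)),
    (absurd rfl hne),
    (absurd rfl hne),
    (rsup hr H.z (h)),
    (absurd rfl hne),
    (absurd rfl hne),
    (absurd rfl hne),
    (absurd rfl hne),
    (rsup hr H.z (h)),
    (absurd rfl hne),
    (absurd rfl hne),
    (rsup hr H.z (h)),
    (rsup hr H.z (hr.1.symm (h))),
    (rsup hr H.z (hr.1.symm (h))),
    (rsup hr H.z (hr.1.symm (h))),
    (rsup hr H.z (hr.1.symm (h))),
    (absurd rfl hne),
    (rsup hr H.z (hr.1.symm (h))),
    (hr.1.trans (hr.1.symm (h)) (rsup hr H.x (h))),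
    (absurd rfl hne),
    (absurd rfl hne),
    (absurd rfl hne),
    (absurd rfl hne),
    (absurd rfl hne),
    (rsup hr H.z (h)),
    (absurd rfl hne),
    (absurd rfl hne),
    (rsup hr H.z (h)),
    (absurd rfl hne),
    (absurd rfl hne),
    (absurd rfl hne),
    (absurd rfl hne),
    (rsup hr H.a (h)),
    (absurd rfl hne),
    (absurd rfl hne),
    (h),
    (hr.1.trans (rinf hr H.z (h)) (hr.1.symm (h))),
    (hr.1.trans (rinf hr H.z (h)) (hr.1.symm (h))),
    (hr.1.trans (rinf hr H.z (h)) (hr.1.symm (h))),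
    (hr.1.trans (rinf hr H.z (h)) (hr.1.symm (h))),
    (absurd rfl hne),
    (hr.1.trans (rinf hr H.z (h)) (hr.1.symm (h))),
    (hr.1.symm (h)),
    (absurd rfl hne)
  ]

theorem forceB {r : H → H → Prop} (hr : Hcon r) :
    ∀ p q : H, ¬ t2R p q → r p q → r H.e0 H.y := by
  intro p q hne h
  cases p <;> cases q
  exacts [
    (absurd rfl hne),
    (hr.1.trans (rinf hr H.c (rsup hr H.b (h))) (rsup hr H.c (h))),
    (hr.1.trans (rinf hr H.c (rsup hr H.a (h))) (rsup hr H.c (h))),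
    (hr.1.trans (rinf hr H.b (rsup hr H.a (h))) (rsup hr H.b (h))),
    (hr.1.trans (rinf hr H.b (rsup hr H.a (h))) (rinf hr H.y (rsup hr H.b (h)))),
    (h),
    (rinf hr H.y (h)),
    (rinf hr H.y (h)),
    (hr.1.symm (hr.1.trans (rsup hr H.b (h)) (rinf hr H.b (rsup hr H.c (h))))),
    (absurd rfl hne),
    (hr.1.trans (rinf hr H.b (h)) (hr.1.trans (hr.1.symm (h)) (rsup hr H.a (h)))),
    (hr.1.trans (rinf hr H.c (h)) (hr.1.trans (hr.1.symm (h)) (rsup hr H.a (h)))),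
    (hr.1.trans (rinf hr H.c (h)) (rinf hr H.y (hr.1.trans (hr.1.symm (h)) (rsup hr H.a (h))))),
    (hr.1.trans (rinf hr H.b (h)) (rsup hr H.b (rinf hr H.c (h)))),
    (hr.1.trans (rinf hr H.b (h)) (rsup hr H.b (rinf hr H.c (h)))),
    (hr.1.trans (rinf hr H.b (h)) (rsup hr H.b (rinf hr H.c (h)))),
    (hr.1.symm (hr.1.trans (rsup hr H.a (h)) (rinf hr H.a (rsup hr H.c (h))))),
    (hr.1.trans (rinf hr H.a (h)) (hr.1.trans (hr.1.symm (h)) (rsup hr H.b (h)))),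
    (absurd rfl hne),
    (hr.1.trans (rinf hr H.c (h)) (hr.1.trans (hr.1.symm (h)) (rsup hr H.b (h)))),
    (hr.1.trans (rinf hr H.c (h)) (rinf hr H.y (hr.1.trans (hr.1.symm (h)) (rsup hr H.b (h))))),
    (hr.1.trans (rinf hr H.a (h)) (rsup hr H.a (rinf hr H.c (h)))),
    (hr.1.trans (rinf hr H.a (h)) (rsup hr H.a (rinf hr H.c (h)))),
    (hr.1.trans (rinf hr H.a (h)) (rsup hr H.a (rinf hr H.c (h)))),
    (hr.1.symm (hr.1.trans (rsup hr H.a (h)) (rinf hr H.a (rsup hr H.b (h))))),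
    (hr.1.trans (rinf hr H.a (h)) (hr.1.trans (hr.1.symm (h)) (rsup hr H.c (h)))),
    (hr.1.trans (rinf hr H.b (h)) (hr.1.trans (hr.1.symm (h)) (rsup hr H.c (h)))),
    (absurd rfl hne),
    (absurd rfl hne),
    (hr.1.trans (rinf hr H.a (h)) (rsup hr H.a (rinf hr H.b (h)))),
    (hr.1.trans (rinf hr H.a (h)) (rsup hr H.a (rinf hr H.b (h)))),
    (hr.1.trans (rinf hr H.a (h)) (rsup hr H.a (rinf hr H.b (h)))),
    (hr.1.symm (hr.1.trans (rinf hr H.y (rsup hr H.a (h))) (rinf hr H.a (rsup hr H.b (h))))),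
    (hr.1.trans (rinf hr H.a (h)) (hr.1.trans (hr.1.symm (h)) (rsup hr H.c (h)))),
    (hr.1.trans (rinf hr H.b (h)) (hr.1.trans (hr.1.symm (h)) (rsup hr H.c (h)))),
    (absurd rfl hne),
    (absurd rfl hne),
    (hr.1.trans (rinf hr H.a (h)) (rsup hr H.a (rinf hr H.b (h)))),
    (hr.1.trans (rinf hr H.a (h)) (rsup hr H.a (rinf hr H.b (h)))),
    (hr.1.trans (rinf hr H.a (h)) (rsup hr H.a (rinf hr H.b (h)))),
    (hr.1.symm (h)),
    (hr.1.symm (hr.1.trans (rsup hr H.c (rinf hr H.b (h))) (rinf hr H.c (h)))),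
    (hr.1.symm (hr.1.trans (rsup hr H.c (rinf hr H.a (h))) (rinf hr H.c (h)))),
    (hr.1.symm (hr.1.trans (rsup hr H.b (rinf hr H.a (h))) (rinf hr H.b (h)))),
    (hr.1.symm (hr.1.trans (rsup hr H.b (rinf hr H.a (h))) (rinf hr H.b (h)))),
    (absurd rfl hne),
    (absurd rfl hne),
    (absurd rfl hne),
    (hr.1.trans (hr.1.symm (h)) (rsup hr H.y (h))),
    (hr.1.symm (hr.1.trans (rsup hr H.c (rinf hr H.b (h))) (rinf hr H.c (h)))),
    (hr.1.symm (hr.1.trans (rsup hr H.c (rinf hr H.a (h))) (rinf hr H.c (h)))),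
    (hr.1.symm (hr.1.trans (rsup hr H.b (rinf hr H.a (h))) (rinf hr H.b (h)))),
    (hr.1.symm (hr.1.trans (rsup hr H.b (rinf hr H.a (h))) (rinf hr H.b (h)))),
    (absurd rfl hne),
    (absurd rfl hne),
    (absurd rfl hne),
    (hr.1.trans (hr.1.symm (h)) (rsup hr H.y (h))),
    (hr.1.symm (hr.1.trans (rsup hr H.c (rinf hr H.b (h))) (rinf hr H.c (h)))),
    (hr.1.symm (hr.1.trans (rsup hr H.c (rinf hr H.a (h))) (rinf hr H.c (h)))),
    (hr.1.symm (hr.1.trans (rsup hr H.b (rinf hr H.a (h))) (rinf hr H.b (h)))),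
    (hr.1.symm (hr.1.trans (rsup hr H.b (rinf hr H.a (h))) (rinf hr H.b (h)))),
    (absurd rfl hne),
    (absurd rfl hne),
    (absurd rfl hne)
  ]

theorem lbT1 {r : H → H → Prop} (hr : Hcon r) (h : r H.y H.z) :
    ∀ p q : H, t1R p q → r p q := by
  intro p q hpq
  cases p <;> cases q
  exacts [
    (hr.1.refl H.e0),
    (absurd hpq (by decide)),
    (absurd hpq (by decide)),
    (absurd hpq (by decide)),
    (absurd hpq (by decide)),
    (absurd hpq (by decide)),
    (absurd hpq (by decide)),
    (absurd hpq (by decide)),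
    (absurd hpq (by decide)),
    (hr.1.refl H.a),
    (absurd hpq (by decide)),
    (absurd hpq (by decide)),
    (absurd hpq (by decide)),
    (absurd hpq (by decide)),
    (absurd hpq (by decide)),
    (absurd hpq (by decide)),
    (absurd hpq (by decide)),
    (absurd hpq (by decide)),
    (hr.1.refl H.b),
    (absurd hpq (by decide)),
    (absurd hpq (by decide)),
    (absurd hpq (by decide)),
    (absurd hpq (by decide)),
    (absurd hpq (by decide)),
    (absurd hpq (by decide)),
    (absurd hpq (by decide)),
    (absurd hpq (by decide)),
    (hr.1.refl H.c),
    (absurd hpq (by decide)),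
    (absurd hpq (by decide)),
    (absurd hpq (by decide)),
    (absurd hpq (by decide)),
    (absurd hpq (by decide)),
    (absurd hpq (by decide)),
    (absurd hpq (by decide)),
    (absurd hpq (by decide)),
    (hr.1.refl H.x),
    (absurd hpq (by decide)),
    (absurd hpq (by decide)),
    (absurd hpq (by decide)),
    (absurd hpq (by decide)),
    (absurd hpq (by decide)),
    (absurd hpq (by decide)),
    (absurd hpq (by decide)),
    (absurd hpq (by decide)),
    (hr.1.refl H.y),
    (h),
    (absurd hpq (by decide)),
    (absurd hpq (by decide)),
    (absurd hpq (by decide)),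
    (absurd hpq (by decide)),
    (absurd hpq (by decide)),
    (absurd hpq (by decide)),
    (hr.1.symm (h)),
    (hr.1.refl H.z),
    (absurd hpq (by decide)),
    (absurd hpq (by decide)),
    (absurd hpq (by decide)),
    (absurd hpq (by decide)),
    (absurd hpq (by decide)),
    (absurd hpq (by decide)),
    (absurd hpq (by decide)),
    (absurd hpq (by decide)),
    (hr.1.refl H.e1)
  ]

theorem lbT2 {r : H → H → Prop} (hr : Hcon r) (h : r H.z H.e1) :
    ∀ p q : H, t2R p q → r p q := by
  intro p q hpq
  cases p <;> cases q
  exacts [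
    (hr.1.refl H.e0),
    (absurd hpq (by decide)),
    (absurd hpq (by decide)),
    (absurd hpq (by decide)),
    (absurd hpq (by decide)),
    (absurd hpq (by decide)),
    (absurd hpq (by decide)),
    (absurd hpq (by decide)),
    (absurd hpq (by decide)),
    (hr.1.refl H.a),
    (absurd hpq (by decide)),
    (absurd hpq (by decide)),
    (absurd hpq (by decide)),
    (absurd hpq (by decide)),
    (absurd hpq (by decide)),
    (absurd hpq (by decide)),
    (absurd hpq (by decide)),
    (absurd hpq (by decide)),
    (hr.1.refl H.b),
    (absurd hpq (by decide)),
    (absurd hpq (by decide)),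
    (absurd hpq (by decide)),
    (absurd hpq (by decide)),
    (absurd hpq (by decide)),
    (absurd hpq (by decide)),
    (absurd hpq (by decide)),
    (absurd hpq (by decide)),
    (hr.1.refl H.c),
    (rinf hr H.x (h)),
    (absurd hpq (by decide)),
    (absurd hpq (by decide)),
    (absurd hpq (by decide)),
    (absurd hpq (by decide)),
    (absurd hpq (by decide)),
    (absurd hpq (by decide)),
    (rinf hr H.x (hr.1.symm (h))),
    (hr.1.refl H.x),
    (absurd hpq (by decide)),
    (absurd hpq (by decide)),
    (absurd hpq (by decide)),
    (absurd hpq (by decide)),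
    (absurd hpq (by decide)),
    (absurd hpq (by decide)),
    (absurd hpq (by decide)),
    (absurd hpq (by decide)),
    (hr.1.refl H.y),
    (hr.1.trans (rsup hr H.a (rinf hr H.x (h))) (hr.1.symm (h))),
    (rsup hr H.a (rinf hr H.x (h))),
    (absurd hpq (by decide)),
    (absurd hpq (by decide)),
    (absurd hpq (by decide)),
    (absurd hpq (by decide)),
    (absurd hpq (by decide)),
    (hr.1.symm (hr.1.trans (rsup hr H.a (rinf hr H.x (h))) (hr.1.symm (h)))),
    (hr.1.refl H.z),
    (h),
    (absurd hpq (by decide)),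
    (absurd hpq (by decide)),
    (absurd hpq (by decide)),
    (absurd hpq (by decide)),
    (absurd hpq (by decide)),
    (rsup hr H.a (rinf hr H.x (hr.1.symm (h)))),
    (hr.1.symm (h)),
    (hr.1.refl H.e1)
  ]

theorem lbT3 {r : H → H → Prop} (hr : Hcon r) (h : r H.e0 H.y) :
    ∀ p q : H, t3R p q → r p q := by
  intro p q hpq
  cases p <;> cases q
  exacts [
    (hr.1.refl H.e0),
    (rinf hr H.a (h)),
    (rinf hr H.b (h)),
    (rinf hr H.c (h)),
    (absurd hpq (by decide)),
    (h),
    (hr.1.trans (rinf hr H.c (h)) (rinf hr H.z (rsup hr H.x (h)))),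
    (absurd hpq (by decide)),
    (hr.1.trans (rsup hr H.a (h)) (hr.1.symm (h))),
    (hr.1.refl H.a),
    (hr.1.trans (rsup hr H.a (h)) (hr.1.trans (hr.1.symm (h)) (rinf hr H.b (h)))),
    (hr.1.trans (rsup hr H.a (h)) (hr.1.trans (hr.1.symm (h)) (rinf hr H.c (h)))),
    (absurd hpq (by decide)),
    (rsup hr H.a (h)),
    (rsup hr H.a (hr.1.trans (rinf hr H.c (h)) (rinf hr H.z (rsup hr H.x (h))))),
    (absurd hpq (by decide)),
    (hr.1.trans (rsup hr H.b (h)) (hr.1.symm (h))),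
    (hr.1.trans (rsup hr H.b (h)) (hr.1.trans (hr.1.symm (h)) (rinf hr H.a (h)))),
    (hr.1.refl H.b),
    (hr.1.trans (rsup hr H.b (h)) (hr.1.trans (hr.1.symm (h)) (rinf hr H.c (h)))),
    (absurd hpq (by decide)),
    (rsup hr H.b (h)),
    (rsup hr H.b (hr.1.trans (rinf hr H.c (h)) (rinf hr H.z (rsup hr H.x (h))))),
    (absurd hpq (by decide)),
    (hr.1.trans (rsup hr H.c (h)) (hr.1.symm (h))),
    (hr.1.trans (rsup hr H.c (h)) (hr.1.trans (hr.1.symm (h)) (rinf hr H.a (h)))),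
    (hr.1.trans (rsup hr H.c (h)) (hr.1.trans (hr.1.symm (h)) (rinf hr H.b (h)))),
    (hr.1.refl H.c),
    (absurd hpq (by decide)),
    (rsup hr H.c (h)),
    (rinf hr H.z (rsup hr H.x (h))),
    (absurd hpq (by decide)),
    (absurd hpq (by decide)),
    (absurd hpq (by decide)),
    (absurd hpq (by decide)),
    (absurd hpq (by decide)),
    (hr.1.refl H.x),
    (absurd hpq (by decide)),
    (absurd hpq (by decide)),
    (rsup hr H.x (h)),
    (hr.1.symm (h)),
    (hr.1.trans (hr.1.symm (h)) (rinf hr H.a (h))),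
    (hr.1.trans (hr.1.symm (h)) (rinf hr H.b (h))),
    (hr.1.trans (hr.1.symm (h)) (rinf hr H.c (h))),
    (absurd hpq (by decide)),
    (hr.1.refl H.y),
    (hr.1.trans (hr.1.trans (hr.1.symm (h)) (rinf hr H.c (h))) (rinf hr H.z (rsup hr H.x (h)))),
    (absurd hpq (by decide)),
    (hr.1.symm (hr.1.trans (rinf hr H.c (h)) (rinf hr H.z (rsup hr H.x (h))))),
    (hr.1.trans (rinf hr H.z (rsup hr H.x (hr.1.symm (h)))) (hr.1.trans (rsup hr H.c (h)) (hr.1.trans (hr.1.symm (h)) (rinf hr H.a (h))))),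
    (hr.1.trans (rinf hr H.z (rsup hr H.x (hr.1.symm (h)))) (hr.1.trans (rsup hr H.c (h)) (hr.1.trans (hr.1.symm (h)) (rinf hr H.b (h))))),
    (rinf hr H.z (rsup hr H.x (hr.1.symm (h)))),
    (absurd hpq (by decide)),
    (hr.1.symm (hr.1.trans (hr.1.trans (hr.1.symm (h)) (rinf hr H.c (h))) (rinf hr H.z (rsup hr H.x (h))))),
    (hr.1.refl H.z),
    (absurd hpq (by decide)),
    (absurd hpq (by decide)),
    (absurd hpq (by decide)),
    (absurd hpq (by decide)),
    (absurd hpq (by decide)),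
    (rsup hr H.x (hr.1.symm (h))),
    (absurd hpq (by decide)),
    (absurd hpq (by decide)),
    (hr.1.refl H.e1)
  ]

theorem lbN {r : H → H → Prop} (hr : Hcon r) (h1 : r H.e0 H.y) (h2 : r H.z H.e1) :
    ∀ p q : H, r p q := by
  have htop : ∀ p : H, r p H.e1 := by
    intro p; cases p
    exacts [
      (hr.1.trans (h1) (rsup hr H.a (rinf hr H.x (h2)))),
      (rsup hr H.a (hr.1.trans (rinf hr H.c (h1)) (rinf hr H.x (h2)))),
      (rsup hr H.b (hr.1.trans (rinf hr H.c (h1)) (rinf hr H.x (h2)))),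
      (hr.1.trans (rinf hr H.x (h2)) (rsup hr H.x (h1))),
      (rsup hr H.x (h1)),
      (rsup hr H.a (rinf hr H.x (h2))),
      (h2),
      (hr.1.refl H.e1)
    ]
  intro p q
  exact hr.1.trans (htop p) (hr.1.symm (htop q))

theorem relext {α : Type} {r s : α → α → Prop} (h : ∀ a b, r a b ↔ s a b) : r = s :=
  funext fun a => funext fun b => propext (h a b)

theorem forceC {r : H → H → Prop} (hr : Hcon r) (a b : H) (hne : ¬ t1R a b)
    (h : r a b) : r H.z H.e1 ∨ r H.e0 H.y := by
  by_cases h2 : t2R a b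
  · exact Or.inl (forceA hr a b
      (fun hc => hne ((by decide : ∀ u v, t2R u v → t3R u v → t1R u v) a b h2 hc)) h)
  · exact Or.inr (forceB hr a b h2 h)

theorem classify {r : H → H → Prop} (hr : Hcon r) :
    r = (latAlg H).delta ∨ r = t1R ∨ r = t2R ∨ r = t3R ∨ r = (latAlg H).nabla := by
  by_cases h3 : r H.e0 H.y
  · by_cases h2 : r H.z H.e1
    · exact Or.inr (Or.inr (Or.inr (Or.inr (relext fun a b =>
        iff_of_true (lbN hr h3 h2 a b) trivial))))
    · refine Or.inr (Or.inr (Or.inr (Or.inl (relext fun a b => ⟨fun hab => ?_,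
        lbT3 hr h3 a b⟩))))
      by_contra hne
      exact h2 (forceA hr a b hne hab)
  · by_cases h2 : r H.z H.e1
    · refine Or.inr (Or.inr (Or.inl (relext fun a b => ⟨fun hab => ?_,
        lbT2 hr h2 a b⟩)))
      by_contra hne
      exact h3 (forceB hr a b hne hab)
    · by_cases h1 : r H.y H.z
      · refine Or.inr (Or.inl (relext fun a b => ⟨fun hab => ?_, lbT1 hr h1 a b⟩))
        by_contra hne
        rcases forceC hr a b hne hab with hc | hc
        · exact h2 hc
        · exact h3 hc
      · refine Or.inl (relext fun a b => ⟨fun hab => ?_, fun he => he ▸ hr.1.refl a⟩)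
        by_contra hne
        by_cases ht : t1R a b
        · have : (a = H.y ∧ b = H.z) ∨ (a = H.z ∧ b = H.y) :=
            (by decide : ∀ u v, t1R u v → ¬ u = v →
              (u = H.y ∧ v = H.z) ∨ (u = H.z ∧ v = H.y)) a b ht hne
          rcases this with ⟨rfl, rfl⟩ | ⟨rfl, rfl⟩
          · exact h1 hab
          · exact h1 (hr.1.symm hab)
        · rcases forceC hr a b ht hab with hc | hc
          · exact h2 hc
          · exact h3 hc

deriving instance DecidableEq for LatOp
instance : Fintype LatOp :=
  ⟨⟨(([.sup, .inf, .bot, .top] : List LatOp) : Multiset LatOp), by decide⟩,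
    fun x => by cases x <;> decide⟩
instance : DecidableEq (latAlg H).carrier := inferInstanceAs (DecidableEq H)
instance : Fintype (latAlg H).carrier := inferInstanceAs (Fintype H)

instance (a b : H) : Decidable ((latAlg H).delta a b) := inferInstanceAs (Decidable (a = b))
instance (a b : H) : Decidable ((latAlg H).nabla a b) := Decidable.isTrue trivial

-- Congruence proofs for the concrete relations
set_option maxRecDepth 10000 in
theorem hcon_t1 : Hcon t1R :=
  ⟨⟨fun _ => rfl, fun h => h.symm, fun h h' => h.trans h'⟩, by unfold latAlg; decide⟩
set_option maxRecDepth 10000 in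
theorem hcon_t2 : Hcon t2R :=
  ⟨⟨fun _ => rfl, fun h => h.symm, fun h h' => h.trans h'⟩, by unfold latAlg; decide⟩
set_option maxRecDepth 10000 in
theorem hcon_t3 : Hcon t3R :=
  ⟨⟨fun _ => rfl, fun h => h.symm, fun h h' => h.trans h'⟩, by unfold latAlg; decide⟩

section GeneralCon

variable {σ : Signature} {A : Alg σ}

theorem isCon_delta (A : Alg σ) : A.IsCon A.delta :=
  ⟨⟨fun _ => rfl, fun h => h.symm, fun h h' => h.trans h'⟩,
    fun f x y h => by
      have : x = y := funext h
      exact this ▸ rfl⟩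

theorem isCon_nabla (A : Alg σ) : A.IsCon A.nabla :=
  ⟨⟨fun _ => trivial, fun _ => trivial, fun _ _ => trivial⟩, fun _ _ _ _ => trivial⟩

theorem conJoin_absorb {r s : A.carrier → A.carrier → Prop} (hr : A.IsCon r)
    (hsub : ∀ a b, s a b → r a b) : A.conJoin r s = r :=
  relext fun a b => ⟨fun h => h r hr (fun _ _ => id) hsub,
    fun h _t ht h1 _h2 => h1 a b h⟩

theorem conJoin_absorb' {r s : A.carrier → A.carrier → Prop} (hr : A.IsCon r)
    (hsub : ∀ a b, s a b → r a b) : A.conJoin s r = r :=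
  relext fun a b => ⟨fun h => h r hr hsub (fun _ _ => id),
    fun h _t ht _h1 h2 => h2 a b h⟩

theorem isFC_delta (A : Alg σ) : A.IsFC A.delta := by
  refine ⟨isCon_delta A, A.nabla, isCon_nabla A,
    conJoin_absorb' (isCon_nabla A) (fun _ _ _ => trivial),
    relext fun a b => ⟨fun h => h.1, fun h => ⟨h, trivial⟩⟩,
    relext fun a b => ?_⟩
  exact ⟨fun _ => ⟨a, rfl, trivial⟩, fun _ => ⟨b, trivial, rfl⟩⟩

theorem isFC_nabla (A : Alg σ) : A.IsFC A.nabla := by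
  refine ⟨isCon_nabla A, A.delta, isCon_delta A,
    conJoin_absorb (isCon_nabla A) (fun _ _ _ => trivial),
    relext fun a b => ⟨fun h => h.2, fun h => ⟨trivial, h⟩⟩,
    relext fun a b => ?_⟩
  exact ⟨fun _ => ⟨b, trivial, rfl⟩, fun _ => ⟨a, rfl, trivial⟩⟩

end GeneralCon

section QuotLemmas

variable {σ : Signature} {A : Alg σ} {θ : A.carrier → A.carrier → Prop}

theorem mk_exact (hθ : A.IsCon θ) {a b : A.carrier}
    (h : Quot.mk θ a = Quot.mk θ b) : θ a b :=
  hθ.1.eqvGen_iff.mp (Quot.eqvGen_exact h)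

/-- Pull back a relation on the quotient to the base. -/
def Alg.pull (A : Alg σ) (θ : A.carrier → A.carrier → Prop)
    (γ : Quot θ → Quot θ → Prop) : A.carrier → A.carrier → Prop :=
  fun a b => γ (Quot.mk θ a) (Quot.mk θ b)

theorem pull_supset (hθ : A.IsCon θ) {γ : Quot θ → Quot θ → Prop}
    (hγ : (A.quotAlg θ).IsCon γ) (a b : A.carrier) (h : θ a b) : A.pull θ γ a b := by
  show γ (Quot.mk θ a) (Quot.mk θ b)
  rw [Quot.sound h]
  exact hγ.1.refl _

theorem isCon_pull (hθ : A.IsCon θ) {γ : Quot θ → Quot θ → Prop}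
    (hγ : (A.quotAlg θ).IsCon γ) : A.IsCon (A.pull θ γ) := by
  refine ⟨⟨fun a => hγ.1.refl _, fun h => hγ.1.symm h, fun h h' => hγ.1.trans h h'⟩,
    fun f x y h => ?_⟩
  have h1 := hγ.2 f (fun i => Quot.mk θ (x i)) (fun i => Quot.mk θ (y i)) h
  have ex : Quot.mk θ (A.interp f fun i => (Quot.mk θ (x i)).out) =
      Quot.mk θ (A.interp f x) :=
    Quot.sound (hθ.2 f _ x fun i => mk_exact hθ (Quot.out_eq _))
  have ey : Quot.mk θ (A.interp f fun i => (Quot.mk θ (y i)).out) =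
      Quot.mk θ (A.interp f y) :=
    Quot.sound (hθ.2 f _ y fun i => mk_exact hθ (Quot.out_eq _))
  show γ (Quot.mk θ (A.interp f x)) (Quot.mk θ (A.interp f y))
  rw [← ex, ← ey]
  exact h1

theorem quotRel_mk (hθ : A.IsCon θ) {α : A.carrier → A.carrier → Prop}
    (hα : A.IsCon α) (hsub : ∀ a b, θ a b → α a b) {a b : A.carrier} :
    A.quotRel θ α (Quot.mk θ a) (Quot.mk θ b) ↔ α a b := by
  constructor
  · rintro ⟨a', b', ha, hb, h⟩
    exact hα.1.trans (hα.1.trans (hsub _ _ (mk_exact hθ ha)) h)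
      (hα.1.symm (hsub _ _ (mk_exact hθ hb)))
  · intro h
    exact ⟨a, b, rfl, rfl, h⟩

theorem isCon_quotRel (hθ : A.IsCon θ) {α : A.carrier → A.carrier → Prop}
    (hα : A.IsCon α) (hsub : ∀ a b, θ a b → α a b) :
    (A.quotAlg θ).IsCon (A.quotRel θ α) := by
  have key : ∀ x y : Quot θ, A.quotRel θ α x y ↔ α x.out y.out := by
    intro x y
    conv_lhs => rw [← Quot.out_eq x, ← Quot.out_eq y]
    exact quotRel_mk hθ hα hsub (a := x.out) (b := y.out)
  constructor
  · constructor
    · intro x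
      exact ⟨x.out, x.out, (Quot.out_eq x).symm, (Quot.out_eq x).symm, hα.1.refl _⟩
    · intro x y h
      refine (key y x).mpr ?_; replace h := (key x y).mp h
      exact hα.1.symm h
    · intro x y z h h'
      refine (key x z).mpr ?_; replace h := (key x y).mp h; replace h' := (key y z).mp h'
      exact hα.1.trans h h'
  · intro f x y h
    have h' : ∀ i, α ((x i).out) ((y i).out) := fun i => (key _ _).mp (h i)
    exact ⟨_, _, rfl, rfl, hα.2 f _ _ h'⟩

theorem quotRel_eq_of (hθ : A.IsCon θ) {γ : Quot θ → Quot θ → Prop}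
    (hγ : (A.quotAlg θ).IsCon γ) {ρ : A.carrier → A.carrier → Prop}
    (h : ∀ a b, γ (Quot.mk θ a) (Quot.mk θ b) ↔ ρ a b) :
    A.quotRel θ ρ = γ := by
  apply relext
  intro u v
  constructor
  · rintro ⟨a, b, rfl, rfl, hab⟩
    exact (h a b).mpr hab
  · intro huv
    refine ⟨u.out, v.out, (Quot.out_eq u).symm, (Quot.out_eq v).symm, ?_⟩
    apply (h u.out v.out).mp
    rw [Quot.out_eq u, Quot.out_eq v]
    exact huv

/-- Lift when the pullback equals `θ`: use `ψ = Δ`. -/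
theorem lift_delta (hθ : A.IsCon θ) {γ : Quot θ → Quot θ → Prop}
    (hγ : (A.quotAlg θ).IsCon γ)
    (h : ∀ a b, γ (Quot.mk θ a) (Quot.mk θ b) ↔ θ a b) :
    A.quotRel θ (A.conJoin A.delta θ) = γ := by
  rw [conJoin_absorb' (s := A.delta) hθ (fun a b he => (show a = b from he) ▸ hθ.1.refl a)]
  exact quotRel_eq_of hθ hγ h

/-- Lift when the pullback equals `∇`: use `ψ = ∇`. -/
theorem lift_nabla (hθ : A.IsCon θ) {γ : Quot θ → Quot θ → Prop}
    (hγ : (A.quotAlg θ).IsCon γ)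
    (h : ∀ a b, γ (Quot.mk θ a) (Quot.mk θ b)) :
    A.quotRel θ (A.conJoin A.nabla θ) = γ := by
  rw [conJoin_absorb (s := θ) (isCon_nabla A) (fun _ _ _ => trivial)]
  exact quotRel_eq_of hθ hγ (fun a b => iff_of_true (h a b) trivial)

end QuotLemmas

theorem Mt00 : (latAlg H).conMeet (latAlg H).delta (latAlg H).delta = (latAlg H).delta :=
  relext fun a b => (by decide : ∀ a b : H, (a = b ∧ a = b) ↔ (a = b)) a b

theorem Mt01 : (latAlg H).conMeet (latAlg H).delta t1R = (latAlg H).delta :=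
  relext fun a b => (by decide : ∀ a b : H, (a = b ∧ c1 a = c1 b) ↔ (a = b)) a b

theorem Mt02 : (latAlg H).conMeet (latAlg H).delta t2R = (latAlg H).delta :=
  relext fun a b => (by decide : ∀ a b : H, (a = b ∧ c2 a = c2 b) ↔ (a = b)) a b

theorem Mt03 : (latAlg H).conMeet (latAlg H).delta t3R = (latAlg H).delta :=
  relext fun a b => (by decide : ∀ a b : H, (a = b ∧ c3 a = c3 b) ↔ (a = b)) a b

theorem Mt04 : (latAlg H).conMeet (latAlg H).delta (latAlg H).nabla = (latAlg H).delta :=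
  relext fun a b => (by decide : ∀ a b : H, (a = b ∧ True) ↔ (a = b)) a b

theorem Mt10 : (latAlg H).conMeet t1R (latAlg H).delta = (latAlg H).delta :=
  relext fun a b => (by decide : ∀ a b : H, (c1 a = c1 b ∧ a = b) ↔ (a = b)) a b

theorem Mt11 : (latAlg H).conMeet t1R t1R = t1R :=
  relext fun a b => (by decide : ∀ a b : H, (c1 a = c1 b ∧ c1 a = c1 b) ↔ (c1 a = c1 b)) a b

theorem Mt12 : (latAlg H).conMeet t1R t2R = t1R :=
  relext fun a b => (by decide : ∀ a b : H, (c1 a = c1 b ∧ c2 a = c2 b) ↔ (c1 a = c1 b)) a b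

theorem Mt13 : (latAlg H).conMeet t1R t3R = t1R :=
  relext fun a b => (by decide : ∀ a b : H, (c1 a = c1 b ∧ c3 a = c3 b) ↔ (c1 a = c1 b)) a b

theorem Mt14 : (latAlg H).conMeet t1R (latAlg H).nabla = t1R :=
  relext fun a b => (by decide : ∀ a b : H, (c1 a = c1 b ∧ True) ↔ (c1 a = c1 b)) a b

theorem Mt20 : (latAlg H).conMeet t2R (latAlg H).delta = (latAlg H).delta :=
  relext fun a b => (by decide : ∀ a b : H, (c2 a = c2 b ∧ a = b) ↔ (a = b)) a b

theorem Mt21 : (latAlg H).conMeet t2R t1R = t1R :=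
  relext fun a b => (by decide : ∀ a b : H, (c2 a = c2 b ∧ c1 a = c1 b) ↔ (c1 a = c1 b)) a b

theorem Mt22 : (latAlg H).conMeet t2R t2R = t2R :=
  relext fun a b => (by decide : ∀ a b : H, (c2 a = c2 b ∧ c2 a = c2 b) ↔ (c2 a = c2 b)) a b

theorem Mt23 : (latAlg H).conMeet t2R t3R = t1R :=
  relext fun a b => (by decide : ∀ a b : H, (c2 a = c2 b ∧ c3 a = c3 b) ↔ (c1 a = c1 b)) a b

theorem Mt24 : (latAlg H).conMeet t2R (latAlg H).nabla = t2R :=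
  relext fun a b => (by decide : ∀ a b : H, (c2 a = c2 b ∧ True) ↔ (c2 a = c2 b)) a b

theorem Mt30 : (latAlg H).conMeet t3R (latAlg H).delta = (latAlg H).delta :=
  relext fun a b => (by decide : ∀ a b : H, (c3 a = c3 b ∧ a = b) ↔ (a = b)) a b

theorem Mt31 : (latAlg H).conMeet t3R t1R = t1R :=
  relext fun a b => (by decide : ∀ a b : H, (c3 a = c3 b ∧ c1 a = c1 b) ↔ (c1 a = c1 b)) a b

theorem Mt32 : (latAlg H).conMeet t3R t2R = t1R :=
  relext fun a b => (by decide : ∀ a b : H, (c3 a = c3 b ∧ c2 a = c2 b) ↔ (c1 a = c1 b)) a b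

theorem Mt33 : (latAlg H).conMeet t3R t3R = t3R :=
  relext fun a b => (by decide : ∀ a b : H, (c3 a = c3 b ∧ c3 a = c3 b) ↔ (c3 a = c3 b)) a b

theorem Mt34 : (latAlg H).conMeet t3R (latAlg H).nabla = t3R :=
  relext fun a b => (by decide : ∀ a b : H, (c3 a = c3 b ∧ True) ↔ (c3 a = c3 b)) a b

theorem Mt40 : (latAlg H).conMeet (latAlg H).nabla (latAlg H).delta = (latAlg H).delta :=
  relext fun a b => (by decide : ∀ a b : H, (True ∧ a = b) ↔ (a = b)) a b

theorem Mt41 : (latAlg H).conMeet (latAlg H).nabla t1R = t1R :=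
  relext fun a b => (by decide : ∀ a b : H, (True ∧ c1 a = c1 b) ↔ (c1 a = c1 b)) a b

theorem Mt42 : (latAlg H).conMeet (latAlg H).nabla t2R = t2R :=
  relext fun a b => (by decide : ∀ a b : H, (True ∧ c2 a = c2 b) ↔ (c2 a = c2 b)) a b

theorem Mt43 : (latAlg H).conMeet (latAlg H).nabla t3R = t3R :=
  relext fun a b => (by decide : ∀ a b : H, (True ∧ c3 a = c3 b) ↔ (c3 a = c3 b)) a b

theorem Mt44 : (latAlg H).conMeet (latAlg H).nabla (latAlg H).nabla = (latAlg H).nabla :=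
  relext fun a b => (by decide : ∀ a b : H, (True ∧ True) ↔ (True)) a b

theorem Jt00 : (latAlg H).conJoin (latAlg H).delta (latAlg H).delta = (latAlg H).delta := by
  exact conJoin_absorb (isCon_delta (latAlg H)) (fun a b h => (by decide : ∀ a b : H, (a = b) → (a = b)) a b h)

theorem Jt01 : (latAlg H).conJoin (latAlg H).delta t1R = t1R := by
  exact conJoin_absorb' hcon_t1 (fun a b h => (by decide : ∀ a b : H, (a = b) → (c1 a = c1 b)) a b h)

theorem Jt02 : (latAlg H).conJoin (latAlg H).delta t2R = t2R := by
  exact conJoin_absorb' hcon_t2 (fun a b h => (by decide : ∀ a b : H, (a = b) → (c2 a = c2 b)) a b h)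

theorem Jt03 : (latAlg H).conJoin (latAlg H).delta t3R = t3R := by
  exact conJoin_absorb' hcon_t3 (fun a b h => (by decide : ∀ a b : H, (a = b) → (c3 a = c3 b)) a b h)

theorem Jt04 : (latAlg H).conJoin (latAlg H).delta (latAlg H).nabla = (latAlg H).nabla := by
  exact conJoin_absorb' (isCon_nabla (latAlg H)) (fun a b h => (by decide : ∀ a b : H, (a = b) → (True)) a b h)

theorem Jt10 : (latAlg H).conJoin t1R (latAlg H).delta = t1R := by
  exact conJoin_absorb hcon_t1 (fun a b h => (by decide : ∀ a b : H, (a = b) → (c1 a = c1 b)) a b h)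

theorem Jt11 : (latAlg H).conJoin t1R t1R = t1R := by
  exact conJoin_absorb hcon_t1 (fun a b h => (by decide : ∀ a b : H, (c1 a = c1 b) → (c1 a = c1 b)) a b h)

theorem Jt12 : (latAlg H).conJoin t1R t2R = t2R := by
  exact conJoin_absorb' hcon_t2 (fun a b h => (by decide : ∀ a b : H, (c1 a = c1 b) → (c2 a = c2 b)) a b h)

theorem Jt13 : (latAlg H).conJoin t1R t3R = t3R := by
  exact conJoin_absorb' hcon_t3 (fun a b h => (by decide : ∀ a b : H, (c1 a = c1 b) → (c3 a = c3 b)) a b h)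

theorem Jt14 : (latAlg H).conJoin t1R (latAlg H).nabla = (latAlg H).nabla := by
  exact conJoin_absorb' (isCon_nabla (latAlg H)) (fun a b h => (by decide : ∀ a b : H, (c1 a = c1 b) → (True)) a b h)

theorem Jt20 : (latAlg H).conJoin t2R (latAlg H).delta = t2R := by
  exact conJoin_absorb hcon_t2 (fun a b h => (by decide : ∀ a b : H, (a = b) → (c2 a = c2 b)) a b h)

theorem Jt21 : (latAlg H).conJoin t2R t1R = t2R := by
  exact conJoin_absorb hcon_t2 (fun a b h => (by decide : ∀ a b : H, (c1 a = c1 b) → (c2 a = c2 b)) a b h)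

theorem Jt22 : (latAlg H).conJoin t2R t2R = t2R := by
  exact conJoin_absorb hcon_t2 (fun a b h => (by decide : ∀ a b : H, (c2 a = c2 b) → (c2 a = c2 b)) a b h)

theorem Jt23 : (latAlg H).conJoin t2R t3R = (latAlg H).nabla := by
  apply relext; intro u v
  refine ⟨fun _ => trivial, fun _ t ht hi hj => ?_⟩
  exact lbN ht (hj H.e0 H.y (by decide)) (hi H.z H.e1 (by decide)) u v

theorem Jt24 : (latAlg H).conJoin t2R (latAlg H).nabla = (latAlg H).nabla := by
  exact conJoin_absorb' (isCon_nabla (latAlg H)) (fun a b h => (by decide : ∀ a b : H, (c2 a = c2 b) → (True)) a b h)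

theorem Jt30 : (latAlg H).conJoin t3R (latAlg H).delta = t3R := by
  exact conJoin_absorb hcon_t3 (fun a b h => (by decide : ∀ a b : H, (a = b) → (c3 a = c3 b)) a b h)

theorem Jt31 : (latAlg H).conJoin t3R t1R = t3R := by
  exact conJoin_absorb hcon_t3 (fun a b h => (by decide : ∀ a b : H, (c1 a = c1 b) → (c3 a = c3 b)) a b h)

theorem Jt32 : (latAlg H).conJoin t3R t2R = (latAlg H).nabla := by
  apply relext; intro u v
  refine ⟨fun _ => trivial, fun _ t ht hi hj => ?_⟩
  exact lbN ht (hi H.e0 H.y (by decide)) (hj H.z H.e1 (by decide)) u v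

theorem Jt33 : (latAlg H).conJoin t3R t3R = t3R := by
  exact conJoin_absorb hcon_t3 (fun a b h => (by decide : ∀ a b : H, (c3 a = c3 b) → (c3 a = c3 b)) a b h)

theorem Jt34 : (latAlg H).conJoin t3R (latAlg H).nabla = (latAlg H).nabla := by
  exact conJoin_absorb' (isCon_nabla (latAlg H)) (fun a b h => (by decide : ∀ a b : H, (c3 a = c3 b) → (True)) a b h)

theorem Jt40 : (latAlg H).conJoin (latAlg H).nabla (latAlg H).delta = (latAlg H).nabla := by
  exact conJoin_absorb (isCon_nabla (latAlg H)) (fun a b h => (by decide : ∀ a b : H, (a = b) → (True)) a b h)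

theorem Jt41 : (latAlg H).conJoin (latAlg H).nabla t1R = (latAlg H).nabla := by
  exact conJoin_absorb (isCon_nabla (latAlg H)) (fun a b h => (by decide : ∀ a b : H, (c1 a = c1 b) → (True)) a b h)

theorem Jt42 : (latAlg H).conJoin (latAlg H).nabla t2R = (latAlg H).nabla := by
  exact conJoin_absorb (isCon_nabla (latAlg H)) (fun a b h => (by decide : ∀ a b : H, (c2 a = c2 b) → (True)) a b h)

theorem Jt43 : (latAlg H).conJoin (latAlg H).nabla t3R = (latAlg H).nabla := by
  exact conJoin_absorb (isCon_nabla (latAlg H)) (fun a b h => (by decide : ∀ a b : H, (c3 a = c3 b) → (True)) a b h)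

theorem Jt44 : (latAlg H).conJoin (latAlg H).nabla (latAlg H).nabla = (latAlg H).nabla := by
  exact conJoin_absorb (isCon_nabla (latAlg H)) (fun a b h => (by decide : ∀ a b : H, (True) → (True)) a b h)

theorem hcd : (latAlg H).CongDistrib := by
  intro r s t hr hs ht
  rcases classify hr with rfl | rfl | rfl | rfl | rfl <;>
    rcases classify hs with rfl | rfl | rfl | rfl | rfl <;>
      rcases classify ht with rfl | rfl | rfl | rfl | rfl <;>
        simp only [Mt00, Mt01, Mt02, Mt03, Mt04, Mt10, Mt11, Mt12, Mt13, Mt14, Mt20, Mt21, Mt22, Mt23, Mt24, Mt30, Mt31, Mt32, Mt33, Mt34, Mt40, Mt41, Mt42, Mt43, Mt44, Jt00, Jt01, Jt02, Jt03, Jt04, Jt10, Jt11, Jt12, Jt13, Jt14, Jt20, Jt21, Jt22, Jt23, Jt24, Jt30, Jt31, Jt32, Jt33, Jt34, Jt40, Jt41, Jt42, Jt43, Jt44] <;> rfl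

theorem pw {α : Type} {p q : α → α → Prop} (h : p = q) (a b : α) : p a b ↔ q a b :=
  iff_of_eq (congrFun (congrFun h a) b)

theorem lift_goal {θ : H → H → Prop} (hθ : Hcon θ)
    {γ : Quot θ → Quot θ → Prop} (hγc : ((latAlg H).quotAlg θ).IsCon γ)
    (h : (∀ a b, γ (Quot.mk θ a) (Quot.mk θ b) ↔ θ a b) ∨
      (∀ a b : H, γ (Quot.mk θ a) (Quot.mk θ b))) :
    ∃ ψ, (latAlg H).IsFC ψ ∧ (latAlg H).quotRel θ ((latAlg H).conJoin ψ θ) = γ := by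
  rcases h with h | h
  · exact ⟨(latAlg H).delta, isFC_delta _, lift_delta hθ hγc h⟩
  · exact ⟨(latAlg H).nabla, isFC_nabla _, lift_nabla hθ hγc h⟩

theorem fc_trivial {θ : H → H → Prop} (hθ : Hcon θ)
    {γ : Quot θ → Quot θ → Prop} (hγ : ((latAlg H).quotAlg θ).IsFC γ) :
    (∀ a b, γ (Quot.mk θ a) (Quot.mk θ b) ↔ θ a b) ∨
      (∀ a b : H, γ (Quot.mk θ a) (Quot.mk θ b)) := by
  obtain ⟨hγc, γ', hγ'c, hjoin, hmeet, hcomp⟩ := hγ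
  have hpc := isCon_pull hθ hγc
  have hpc' := isCon_pull hθ hγ'c
  have hsubθ : ∀ a b, θ a b → (latAlg H).pull θ γ a b := pull_supset hθ hγc
  have hsubθ' : ∀ a b, θ a b → (latAlg H).pull θ γ' a b := pull_supset hθ hγ'c
  -- pointwise meet
  have hmeetP : ∀ a b : H, γ (Quot.mk θ a) (Quot.mk θ b) →
      γ' (Quot.mk θ a) (Quot.mk θ b) → θ a b := by
    intro a b h1 h2
    have e : ((latAlg H).quotAlg θ).conMeet γ γ' (Quot.mk θ a) (Quot.mk θ b) :=
      ⟨h1, h2⟩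
    rw [hmeet] at e
    exact mk_exact hθ e
  -- join collapse
  have hjoinP : (∀ x y : Quot θ, γ' x y → γ x y) →
      ∀ a b : H, γ (Quot.mk θ a) (Quot.mk θ b) := by
    intro hsub a b
    have h1 : ((latAlg H).quotAlg θ).conJoin γ γ' = γ := conJoin_absorb hγc hsub
    rw [h1] at hjoin
    rw [hjoin]
    trivial
  -- from pull γ' ⊆ pull γ conclude γ' ⊆ γ
  have liftSub : (∀ a b : H, (latAlg H).pull θ γ' a b → (latAlg H).pull θ γ a b) →
      ∀ x y : Quot θ, γ' x y → γ x y := by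
    intro hs x y hxy
    have h1 : γ' (Quot.mk θ x.out) (Quot.mk θ y.out) := by
      rw [Quot.out_eq x, Quot.out_eq y]; exact hxy
    have h3 : γ (Quot.mk θ x.out) (Quot.mk θ y.out) := hs x.out y.out h1
    rw [Quot.out_eq x, Quot.out_eq y] at h3
    exact h3
  rcases classify hθ with rfl | rfl | rfl | rfl | rfl
  · -- θ = Δ
    rcases classify hpc with h | h | h | h | h
    · exact Or.inl fun a b => pw h a b
    · -- pull γ = t1R : impossible
      exfalso
      rcases classify hpc' with h' | h' | h' | h' | h'
      · -- complement pulls to Δ: join forces γ = ∇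
        have hall := hjoinP (liftSub fun a b hab =>
          (show (latAlg H).delta a b from (pw h' a b).mp hab) ▸ hpc.1.refl a)
        exact absurd ((pw h H.e0 H.a).mp (hall H.e0 H.a)) (by decide)
      · exact absurd (hmeetP H.y H.z ((pw h H.y H.z).mpr (by decide))
          ((pw h' H.y H.z).mpr (by decide))) (by decide)
      · exact absurd (hmeetP H.y H.z ((pw h H.y H.z).mpr (by decide))
          ((pw h' H.y H.z).mpr (by decide))) (by decide)
      · exact absurd (hmeetP H.y H.z ((pw h H.y H.z).mpr (by decide))
          ((pw h' H.y H.z).mpr (by decide))) (by decide)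
      · exact absurd (hmeetP H.y H.z ((pw h H.y H.z).mpr (by decide))
          ((pw h' H.y H.z).mpr trivial)) (by decide)
    · -- pull γ = t2R : impossible
      exfalso
      rcases classify hpc' with h' | h' | h' | h' | h'
      · have hall := hjoinP (liftSub fun a b hab =>
          (show (latAlg H).delta a b from (pw h' a b).mp hab) ▸ hpc.1.refl a)
        exact absurd ((pw h H.e0 H.a).mp (hall H.e0 H.a)) (by decide)
      · exact absurd (hmeetP H.y H.z ((pw h H.y H.z).mpr (by decide))
          ((pw h' H.y H.z).mpr (by decide))) (by decide)
      · exact absurd (hmeetP H.y H.z ((pw h H.y H.z).mpr (by decide))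
          ((pw h' H.y H.z).mpr (by decide))) (by decide)
      · exact absurd (hmeetP H.y H.z ((pw h H.y H.z).mpr (by decide))
          ((pw h' H.y H.z).mpr (by decide))) (by decide)
      · exact absurd (hmeetP H.y H.z ((pw h H.y H.z).mpr (by decide))
          ((pw h' H.y H.z).mpr trivial)) (by decide)
    · -- pull γ = t3R : impossible
      exfalso
      rcases classify hpc' with h' | h' | h' | h' | h'
      · have hall := hjoinP (liftSub fun a b hab =>
          (show (latAlg H).delta a b from (pw h' a b).mp hab) ▸ hpc.1.refl a)
        exact absurd ((pw h H.e0 H.x).mp (hall H.e0 H.x)) (by decide)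
      · exact absurd (hmeetP H.y H.z ((pw h H.y H.z).mpr (by decide))
          ((pw h' H.y H.z).mpr (by decide))) (by decide)
      · exact absurd (hmeetP H.y H.z ((pw h H.y H.z).mpr (by decide))
          ((pw h' H.y H.z).mpr (by decide))) (by decide)
      · exact absurd (hmeetP H.y H.z ((pw h H.y H.z).mpr (by decide))
          ((pw h' H.y H.z).mpr (by decide))) (by decide)
      · exact absurd (hmeetP H.y H.z ((pw h H.y H.z).mpr (by decide))
          ((pw h' H.y H.z).mpr trivial)) (by decide)
    · exact Or.inr fun a b => (pw h a b).mpr trivial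
  · -- θ = t1R
    rcases classify hpc with h | h | h | h | h
    · exact absurd ((pw h H.y H.z).mp (hsubθ H.y H.z (by decide))) (by decide)
    · exact Or.inl fun a b => pw h a b
    · -- pull γ = t2R : impossible
      exfalso
      rcases classify hpc' with h' | h' | h' | h' | h'
      · exact absurd ((pw h' H.y H.z).mp (hsubθ' H.y H.z (by decide))) (by decide)
      · -- complement pulls to t1R = θ : join forces γ = ∇
        have hall := hjoinP (liftSub fun a b hab => (pw h a b).mpr
          ((by decide : ∀ a b : H, t1R a b → t2R a b) a b ((pw h' a b).mp hab)))
        exact absurd ((pw h H.e0 H.a).mp (hall H.e0 H.a)) (by decide)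
      · exact absurd (hmeetP H.c H.x ((pw h H.c H.x).mpr (by decide))
          ((pw h' H.c H.x).mpr (by decide))) (by decide)
      · -- complement pulls to t3R : compositions do not permute
        have h1 : ((latAlg H).quotAlg t1R).comp γ γ' (Quot.mk t1R H.e0)
            (Quot.mk t1R H.e1) :=
          ⟨Quot.mk t1R H.y, (pw h' H.e0 H.y).mpr (by decide),
            (pw h H.y H.e1).mpr (by decide)⟩
        rw [hcomp] at h1
        obtain ⟨q, hq1, hq2⟩ := h1
        rw [← Quot.out_eq q] at hq1 hq2
        have he : q.out = H.e0 :=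
          (by decide : ∀ u : H, t2R H.e0 u → u = H.e0) q.out
            ((pw h H.e0 q.out).mp hq1)
        rw [he] at hq2
        exact absurd ((pw h' H.e0 H.e1).mp hq2) (by decide)
      · exact absurd (hmeetP H.c H.x ((pw h H.c H.x).mpr (by decide))
          ((pw h' H.c H.x).mpr trivial)) (by decide)
    · -- pull γ = t3R : impossible
      exfalso
      rcases classify hpc' with h' | h' | h' | h' | h'
      · exact absurd ((pw h' H.y H.z).mp (hsubθ' H.y H.z (by decide))) (by decide)
      · have hall := hjoinP (liftSub fun a b hab => (pw h a b).mpr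
          ((by decide : ∀ a b : H, t1R a b → t3R a b) a b ((pw h' a b).mp hab)))
        exact absurd ((pw h H.e0 H.x).mp (hall H.e0 H.x)) (by decide)
      · -- complement pulls to t2R : compositions do not permute
        have h1 : ((latAlg H).quotAlg t1R).comp γ' γ (Quot.mk t1R H.e0)
            (Quot.mk t1R H.e1) :=
          ⟨Quot.mk t1R H.y, (pw h H.e0 H.y).mpr (by decide),
            (pw h' H.y H.e1).mpr (by decide)⟩
        rw [← hcomp] at h1
        obtain ⟨q, hq1, hq2⟩ := h1
        rw [← Quot.out_eq q] at hq1 hq2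
        have he : q.out = H.e0 :=
          (by decide : ∀ u : H, t2R H.e0 u → u = H.e0) q.out
            ((pw h' H.e0 q.out).mp hq1)
        rw [he] at hq2
        exact absurd ((pw h H.e0 H.e1).mp hq2) (by decide)
      · exact absurd (hmeetP H.e0 H.a ((pw h H.e0 H.a).mpr (by decide))
          ((pw h' H.e0 H.a).mpr (by decide))) (by decide)
      · exact absurd (hmeetP H.e0 H.a ((pw h H.e0 H.a).mpr (by decide))
          ((pw h' H.e0 H.a).mpr trivial)) (by decide)
    · exact Or.inr fun a b => (pw h a b).mpr trivial
  · -- θ = t2R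
    rcases classify hpc with h | h | h | h | h
    · exact absurd ((pw h H.c H.x).mp (hsubθ H.c H.x (by decide))) (by decide)
    · exact absurd ((pw h H.c H.x).mp (hsubθ H.c H.x (by decide))) (by decide)
    · exact Or.inl fun a b => pw h a b
    · exact absurd ((pw h H.c H.x).mp (hsubθ H.c H.x (by decide))) (by decide)
    · exact Or.inr fun a b => (pw h a b).mpr trivial
  · -- θ = t3R
    rcases classify hpc with h | h | h | h | h
    · exact absurd ((pw h H.e0 H.a).mp (hsubθ H.e0 H.a (by decide))) (by decide)
    · exact absurd ((pw h H.e0 H.a).mp (hsubθ H.e0 H.a (by decide))) (by decide)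
    · exact absurd ((pw h H.e0 H.a).mp (hsubθ H.e0 H.a (by decide))) (by decide)
    · exact Or.inl fun a b => pw h a b
    · exact Or.inr fun a b => (pw h a b).mpr trivial
  · -- θ = ∇
    exact Or.inr fun a b => hsubθ a b trivial

theorem hfclp : (latAlg H).AlgFCLP := fun _θ hθ _γ hγ =>
  lift_goal hθ hγ.1 (fc_trivial hθ hγ)

theorem h12sub : ∀ a b, t1R a b → t2R a b := by decide
theorem h13sub : ∀ a b, t1R a b → t3R a b := by decide

theorem ncblp : ¬ (latAlg H).AlgCBLP := by
  intro hc
  have hγ2 := isCon_quotRel hcon_t1 hcon_t2 h12sub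
  have hγ3 := isCon_quotRel hcon_t1 hcon_t3 h13sub
  have hbool : ((latAlg H).quotAlg t1R).IsBooleanCon ((latAlg H).quotRel t1R t2R) := by
    refine ⟨hγ2, (latAlg H).quotRel t1R t3R, hγ3, ?_, ?_⟩
    · -- join is ∇
      apply relext; intro u v
      refine ⟨fun _ => trivial, fun _ t ht hs2 hs3 => ?_⟩
      have hpt := isCon_pull hcon_t1 ht
      have hty : t (Quot.mk t1R H.e0) (Quot.mk t1R H.y) :=
        hs3 _ _ ((quotRel_mk hcon_t1 hcon_t3 h13sub).mpr (by decide))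
      have htz : t (Quot.mk t1R H.z) (Quot.mk t1R H.e1) :=
        hs2 _ _ ((quotRel_mk hcon_t1 hcon_t2 h12sub).mpr (by decide))
      have hall := lbN hpt hty htz u.out v.out
      have h3 : t (Quot.mk t1R u.out) (Quot.mk t1R v.out) := hall
      replace h3 := cast (congrArg₂ t (Quot.out_eq u) (Quot.out_eq v)) h3
      exact h3
    · -- meet is Δ
      apply relext; intro u v
      constructor
      · rintro ⟨h2, h3⟩
        obtain ⟨a, b, rfl, rfl, hab⟩ := h2
        have hb : t3R a b := (quotRel_mk hcon_t1 hcon_t3 h13sub).mp h3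
        exact Quot.sound ((by decide : ∀ a b, t2R a b → t3R a b → t1R a b) a b hab hb)
      · intro he
        have he' : u = v := he
        subst he'
        exact ⟨hγ2.1.refl u, hγ3.1.refl u⟩
  obtain ⟨ψ, hψb, heq⟩ := hc t1R hcon_t1 _ hbool
  obtain ⟨hψc, ψ', hψ'c, hjoin, hmeet⟩ := hψb
  have hkey : ∀ ρ (hρ : Hcon ρ) (hsub : ∀ a b, t1R a b → ρ a b),
      (latAlg H).quotRel t1R ρ = (latAlg H).quotRel t1R t2R →
      (ρ H.c H.x ↔ t2R H.c H.x) ∧ (ρ H.e0 H.a ↔ t2R H.e0 H.a) := by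
    intro ρ hρ hsub hq
    constructor
    · exact Iff.trans (quotRel_mk hcon_t1 hρ hsub).symm
        (Iff.trans (pw hq _ _) (quotRel_mk hcon_t1 hcon_t2 h12sub))
    · exact Iff.trans (quotRel_mk hcon_t1 hρ hsub).symm
        (Iff.trans (pw hq _ _) (quotRel_mk hcon_t1 hcon_t2 h12sub))
  rcases classify hψc with rfl | rfl | rfl | rfl | rfl
  · -- ψ = Δ : join with t1R is t1R, cannot map onto γ₂
    rw [Jt01] at heq
    exact absurd ((hkey t1R hcon_t1 (fun _ _ h => h) heq).1.mpr (by decide)) (by decide)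
  · rw [Jt11] at heq
    exact absurd ((hkey t1R hcon_t1 (fun _ _ h => h) heq).1.mpr (by decide)) (by decide)
  · -- ψ = t2R : not a Boolean congruence
    exfalso
    rcases classify hψ'c with rfl | rfl | rfl | rfl | rfl
    · rw [Jt20] at hjoin
      exact absurd ((pw hjoin H.e0 H.a).mpr trivial) (by decide)
    · exact absurd ((pw hmeet H.y H.z).mp ⟨by decide, by decide⟩) (by decide)
    · exact absurd ((pw hmeet H.y H.z).mp ⟨by decide, by decide⟩) (by decide)
    · exact absurd ((pw hmeet H.y H.z).mp ⟨by decide, by decide⟩) (by decide)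
    · exact absurd ((pw hmeet H.y H.z).mp ⟨by decide, trivial⟩) (by decide)
  · rw [Jt31] at heq
    exact absurd ((hkey t3R hcon_t3 h13sub heq).2.mp (by decide)) (by decide)
  · rw [Jt41] at heq
    exact absurd ((hkey (latAlg H).nabla (isCon_nabla _)
      (fun _ _ _ => trivial) heq).2.mp trivial) (by decide)

theorem hnonmod : ¬ IsModularLattice H := fun hm =>
  absurd (hm.sup_inf_le_assoc_of_le (x := H.y) H.x (z := H.z) (by decide)) (by decide)


/-- FCLP does not imply CBLP: there is an eight-element non-modular bounded
lattice with FCLP and without CBLP; in particular, there is a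
congruence-distributive algebra with FCLP and without CBLP. -/
theorem stmt_19 :
    (∃ (L : Type) (instL : Lattice L)
        (instB : @BoundedOrder L
          instL.toSemilatticeSup.toPartialOrder.toPreorder.toLE),
      Finite L ∧ Nat.card L = 8 ∧ ¬ @IsModularLattice L instL ∧
      (@latAlg L instL instB).AlgFCLP ∧ ¬ (@latAlg L instL instB).AlgCBLP) ∧
    ∃ (σ : Signature) (A : Alg σ), Nonempty A.carrier ∧ A.CongDistrib ∧
      A.AlgFCLP ∧ ¬ A.AlgCBLP := by
  constructor
  · exact ⟨H, instHLat, instHBnd, Finite.of_fintype H,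
      by rw [Nat.card_eq_fintype_card]; rfl, hnonmod, hfclp, ncblp⟩
  · exact ⟨latSig, latAlg H, ⟨H.e0⟩, hcd, hfclp, ncblp⟩
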